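/- Let f₁, f₂ : ℝⁿ → ℝ be convex functions and f = f₁ − f₂. A point x* ∈ ℝⁿ is a global minimizer of f (i.e., f(x*) ≤ f(x) for all x ∈ ℝⁿ) if and only if for every ε ≥ 0 one has ∂_ε f₂(x*) ⊆ ∂_ε f₁(x*). -/
import Mathlib

open scoped RealInnerProductSpace

/-- The ε-subdifferential of `g` at `x`. -/
def epsSubdiff {n : ℕ} (g : EuclideanSpace ℝ (Fin n) → ℝ) (ε : ℝ)
    (x : EuclideanSpace ℝ (Fin n)) : Set (EuclideanSpace ℝ (Fin n)) :=
  {ξ | ∀ y, g y ≥ g x + ⟪ξ, y - x⟫ - ε}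

/-- The subdifferential of `g` at `x`. -/
def subdiff {n : ℕ} (g : EuclideanSpace ℝ (Fin n) → ℝ)
    (x : EuclideanSpace ℝ (Fin n)) : Set (EuclideanSpace ℝ (Fin n)) :=
  {ξ | ∀ y, g y ≥ g x + ⟪ξ, y - x⟫}

/-- The t-spherical subdifferential of `g` at `x`. -/
def sphSubdiff {n : ℕ} (g : EuclideanSpace ℝ (Fin n) → ℝ) (t : ℝ)
    (x : EuclideanSpace ℝ (Fin n)) : Set (EuclideanSpace ℝ (Fin n)) :=
  convexHull ℝ {ξ | ∃ d : EuclideanSpace ℝ (Fin n), ‖d‖ = 1 ∧ ξ ∈ subdiff g (x + t • d)}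

/-- Existence of a subgradient for a finite convex function on ℝⁿ. -/
lemma exists_subgradient {n : ℕ} (g : EuclideanSpace ℝ (Fin n) → ℝ)
    (hg : ConvexOn ℝ Set.univ g) (y : EuclideanSpace ℝ (Fin n)) :
    ∃ ξ, ∀ x, g x ≥ g y + ⟪ξ, x - y⟫ := by
  have hcont : Continuous g := hg.locallyLipschitz.continuous
  set S : Set (EuclideanSpace ℝ (Fin n) × ℝ) := {p | g p.1 < p.2} with hS
  have hSopen : IsOpen S := by
    have : S = (fun p : EuclideanSpace ℝ (Fin n) × ℝ => p.2 - g p.1) ⁻¹' Set.Ioi 0 := by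
      ext p; simp [hS, sub_pos]
    rw [this]
    exact (continuous_snd.sub (hcont.comp continuous_fst)).isOpen_preimage _ isOpen_Ioi
  have hSconv : Convex ℝ S := by
    rintro p hp q hq a b ha hb hab
    simp only [hS, Set.mem_setOf_eq] at hp hq ⊢
    have h1 : g (a • p.1 + b • q.1) ≤ a * g p.1 + b * g q.1 :=
      hg.2 (Set.mem_univ _) (Set.mem_univ _) ha hb hab
    have h2 : a * g p.1 + b * g q.1 < a * p.2 + b * q.2 := by
      rcases eq_or_lt_of_le ha with rfl | ha'
      · simp only [zero_add] at hab; subst hab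
        simpa using hq
      · rcases eq_or_lt_of_le hb with rfl | hb'
        · simp only [add_zero] at hab; subst hab
          simpa using hp
        · exact add_lt_add (by nlinarith) (by nlinarith)
    have : (a • p + b • q).1 = a • p.1 + b • q.1 := rfl
    have h3 : (a • p + b • q).2 = a * p.2 + b * q.2 := rfl
    rw [this, h3]
    exact lt_of_le_of_lt h1 h2
  have hnot : (y, g y) ∉ S := by simp [hS]
  obtain ⟨φ, hφ⟩ := geometric_hahn_banach_open_point hSconv hSopen hnot
  set c : ℝ := φ (0, 1) with hc
  have hφeq : ∀ (x : EuclideanSpace ℝ (Fin n)) (t : ℝ), φ (x, t) = φ (x, 0) + t * c := by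
    intro x t
    have : (x, t) = (x, (0 : ℝ)) + t • ((0 : EuclideanSpace ℝ (Fin n)), (1 : ℝ)) := by
      simp [Prod.ext_iff]
    rw [this, map_add, map_smul]
    simp [hc, smul_eq_mul]
  -- c < 0
  have hcneg : c < 0 := by
    have h := hφ (y, g y + 1) (by simp [hS])
    rw [hφeq y (g y + 1), hφeq y (g y)] at h
    nlinarith
  have hc0 : c ≠ 0 := ne_of_lt hcneg
  -- key inequality
  have hkey : ∀ x : EuclideanSpace ℝ (Fin n), φ (x, 0) + g x * c ≤ φ (y, 0) + g y * c := by
    intro x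
    refine le_of_forall_pos_le_add fun ε hε => ?_
    have hδ : (0 : ℝ) < ε / (-c) := div_pos hε (by linarith)
    have h := hφ (x, g x + ε / (-c)) (by simp [hS, hδ])
    rw [hφeq x (g x + ε / (-c)), hφeq y (g y)] at h
    have hmul : ε / (-c) * c = -ε := by
      rw [div_neg, neg_mul, div_mul_cancel₀ _ hc0]
    nlinarith
  -- build ξ via Riesz representation
  set L : EuclideanSpace ℝ (Fin n) →L[ℝ] ℝ := φ.comp (ContinuousLinearMap.inl ℝ _ ℝ) with hL
  have hLapp : ∀ x : EuclideanSpace ℝ (Fin n), L x = φ (x, 0) := fun x => rfl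
  refine ⟨(InnerProductSpace.toDual ℝ (EuclideanSpace ℝ (Fin n))).symm ((-c)⁻¹ • L),
    fun x => ?_⟩
  have hinner : ∀ z : EuclideanSpace ℝ (Fin n),
      ⟪(InnerProductSpace.toDual ℝ (EuclideanSpace ℝ (Fin n))).symm ((-c)⁻¹ • L), z⟫
      = (-c)⁻¹ * L z := by
    intro z
    rw [InnerProductSpace.toDual_symm_apply]
    rfl
  rw [hinner, map_sub]
  have hk := hkey x
  rw [← hLapp x, ← hLapp y] at hk
  have hcpos : (0 : ℝ) < -c := by linarith
  have h5 : (-c)⁻¹ * (L x + g x * c) ≤ (-c)⁻¹ * (L y + g y * c) :=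
    mul_le_mul_of_nonneg_left hk (inv_pos.mpr hcpos).le
  have h7 : (-c)⁻¹ * (L x + g x * c) = (-c)⁻¹ * L x - g x := by
    field_simp; ring
  have h8 : (-c)⁻¹ * (L y + g y * c) = (-c)⁻¹ * L y - g y := by
    field_simp; ring
  have h9 : (-c)⁻¹ * (L x - L y) = (-c)⁻¹ * L x - (-c)⁻¹ * L y := mul_sub _ _ _
  rw [ge_iff_le, h9]
  linarith

theorem global_min_iff_eps_subdiff_inclusion {n : ℕ}
    (f₁ f₂ f : EuclideanSpace ℝ (Fin n) → ℝ)
    (h₁ : ConvexOn ℝ Set.univ f₁) (h₂ : ConvexOn ℝ Set.univ f₂)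
    (hf : ∀ x, f x = f₁ x - f₂ x)
    (xstar : EuclideanSpace ℝ (Fin n)) :
    (∀ x, f xstar ≤ f x) ↔
      (∀ ε : ℝ, 0 ≤ ε → epsSubdiff f₂ ε xstar ⊆ epsSubdiff f₁ ε xstar) := by
  constructor
  · intro hmin ε hε ξ hξ y
    have h := hmin y
    rw [hf, hf] at h
    have h2 := hξ y
    simp only [ge_iff_le] at h2 ⊢
    linarith
  · intro hsub y
    obtain ⟨ξ, hξ⟩ := exists_subgradient f₂ h₂ y
    set ε : ℝ := f₂ xstar - f₂ y - ⟪ξ, xstar - y⟫ with hεdef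
    have hε : 0 ≤ ε := by
      have := hξ xstar
      simp only [ge_iff_le] at this
      linarith
    have hξeps : ξ ∈ epsSubdiff f₂ ε xstar := by
      intro z
      have h1 := hξ z
      have hsplit : ⟪ξ, z - y⟫ = ⟪ξ, z - xstar⟫ + ⟪ξ, xstar - y⟫ := by
        rw [← inner_add_right]
        congr 1
        abel
      simp only [ge_iff_le] at h1 ⊢
      rw [hsplit] at h1
      linarith
    have h2 := hsub ε hε hξeps y
    simp only [epsSubdiff, Set.mem_setOf_eq, ge_iff_le] at h2
    have hys : ⟪ξ, y - xstar⟫ = -⟪ξ, xstar - y⟫ := by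
      rw [← inner_neg_right]
      congr 1
      abel
    have h3 := hξ y
    simp only [ge_iff_le] at h3
    rw [hf, hf]
    rw [hys] at h2
    simp only [inner_sub_right] at *
    linarith
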